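/- Let T : ℂ² → ℂ² be a linear contraction with respect to ⟨·,·⟩_K and let a ∈ Ω be nonneutral. Then for every n and all points λ₁,…,λ_n ∈ 𝔻 with ⟨Φ(λ_i),a⟩_K ≠ 1 for each i, the n×n matrix with (i,j)-entry (1 − ⟨T·φ_a(Φ(λ_i)), T·φ_a(Φ(λ_j))⟩_K)/(1 − ⟨Φ(λ_i),Φ(λ_j)⟩_K) is positive semi-definite. -/

import Mathlib

open Complex ComplexConjugate ComplexOrder

/-- The indefinite inner product `⟨z,w⟩_K = z₁·conj(w₁) − z₂·conj(w₂)` on ℂ². -/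
noncomputable def Kip (z w : Fin 2 → ℂ) : ℂ :=
  z 0 * conj (w 0) - z 1 * conj (w 1)

/-- The unit ball `Ω = {z : |z₁|² − |z₂|² < 1}` of the Kreĭn space `(ℂ², ⟨·,·⟩_K)`. -/
def Omega : Set (Fin 2 → ℂ) :=
  {z | ‖z 0‖ ^ 2 - ‖z 1‖ ^ 2 < 1}

/-- The birational involution `φ_a(z) = (a − P_a z − s_a Q_a z)/(1 − ⟨z,a⟩_K)`,
with the convention `φ_0(z) = −z`.  Here `P_a z = (⟨z,a⟩_K/⟨a,a⟩_K)a`,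
`Q_a = I − P_a` and `s_a = (1 − ⟨a,a⟩_K)^{1/2}` (note `⟨a,a⟩_K` is real). -/
noncomputable def phiK (a z : Fin 2 → ℂ) : Fin 2 → ℂ :=
  if a = 0 then -z
  else
    (1 - Kip z a)⁻¹ •
      (a - (Kip z a / Kip a a) • a
        - (Real.sqrt (1 - (Kip a a).re) : ℂ) • (z - (Kip z a / Kip a a) • a))

/-- The nonlinear embedding `Φ(λ) = (√2·λ, λ²)`. -/
noncomputable def PhiMap (l : ℂ) : Fin 2 → ℂ := ![(Real.sqrt 2 : ℂ) * l, l ^ 2]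

/-! ### Auxiliary lemmas -/

lemma kip_conj (z w : Fin 2 → ℂ) : conj (Kip z w) = Kip w z := by
  simp [Kip]; ring

lemma kip_self_ofReal (z : Fin 2 → ℂ) : Kip z z = ((Kip z z).re : ℂ) := by
  rw [Complex.conj_eq_iff_re.mp (kip_conj z z)]

lemma kip_smul_smul (c d : ℂ) (z w : Fin 2 → ℂ) :
    Kip (c • z) (d • w) = c * conj d * Kip z w := by
  simp [Kip]; ring

lemma kip_expand (c1 c2 d1 d2 : ℂ) (a z b w : Fin 2 → ℂ) :
    Kip (c1 • a + c2 • z) (d1 • b + d2 • w)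
      = c1 * conj d1 * Kip a b + c1 * conj d2 * Kip a w
        + c2 * conj d1 * Kip z b + c2 * conj d2 * Kip z w := by
  simp [Kip]
  try ring

lemma omega_re_lt (a : Fin 2 → ℂ) (haO : a ∈ Omega) : (Kip a a).re < 1 := by
  have : Kip a a = ((‖a 0‖ ^ 2 - ‖a 1‖ ^ 2 : ℝ) : ℂ) := by
    simp [Kip, Complex.mul_conj, ← Complex.sq_norm]
    try push_cast
    try ring
  rw [this, Complex.ofReal_re]; exact haO

lemma scalar_key (t α β γ σ : ℂ) (ht : t ≠ 0) (hσ : σ^2 = 1 - t) :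
    (1 - (α/t) + σ*(α/t)) * (1 - (β/t) + σ*(β/t)) * t
      + (1 - (α/t) + σ*(α/t)) * (-σ) * β
      + (-σ) * (1 - (β/t) + σ*(β/t)) * α
      + (-σ) * (-σ) * γ
    = t - α - β + α*β + (1-t)*γ := by
  field_simp
  linear_combination (t*γ - α*β) * hσ

lemma key_identity (a : Fin 2 → ℂ) (haO : a ∈ Omega) (ha : Kip a a ≠ 0)
    (z w : Fin 2 → ℂ) (hz : Kip z a ≠ 1) (hw : Kip w a ≠ 1) :
    (1 - Kip z a) * conj (1 - Kip w a) * (1 - Kip (phiK a z) (phiK a w))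
      = (1 - Kip a a) * (1 - Kip z w) := by
  have ha0 : a ≠ 0 := by rintro rfl; exact ha (by simp [Kip])
  set s : ℝ := Real.sqrt (1 - (Kip a a).re) with hsdef
  have hs : (s : ℂ) ^ 2 = 1 - Kip a a := by
    rw [hsdef, ← Complex.ofReal_pow, Real.sq_sqrt (by linarith [omega_re_lt a haO])]
    push_cast; rw [← kip_self_ofReal]
  have ht : conj (Kip a a) = Kip a a := kip_conj a a
  have hvec : ∀ u : Fin 2 → ℂ,
      a - (Kip u a / Kip a a) • a - (s : ℂ) • (u - (Kip u a / Kip a a) • a)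
        = (1 - Kip u a / Kip a a + (s:ℂ) * (Kip u a / Kip a a)) • a + (-(s:ℂ)) • u := by
    intro u; funext i; simp; ring
  rw [phiK, if_neg ha0, phiK, if_neg ha0, ← hsdef, hvec z, hvec w,
    kip_smul_smul, kip_expand, ← kip_conj w a]
  simp only [map_sub, map_add, map_one, map_mul, map_div₀, map_inv₀, Complex.conj_conj,
    Complex.conj_ofReal, ht, map_neg]
  rw [scalar_key (Kip a a) (Kip z a) (conj (Kip w a)) (Kip z w) (s:ℂ) ha hs]
  have h1 : (1 : ℂ) - Kip z a ≠ 0 := sub_ne_zero_of_ne fun h => hz h.symm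
  have h2 : (1 : ℂ) - conj (Kip w a) ≠ 0 := by
    intro h
    rw [sub_eq_zero] at h
    apply hw
    rw [← Complex.conj_conj (Kip w a), ← h]
    simp
  field_simp
  ring

lemma kip_Phi (u v : ℂ) : Kip (PhiMap u) (PhiMap v) = 2*(u*conj v) - (u*conj v)^2 := by
  have h2 : ((Real.sqrt 2 : ℝ):ℂ) * ((Real.sqrt 2:ℝ):ℂ) = 2 := by
    rw [← Complex.ofReal_mul, Real.mul_self_sqrt (by norm_num)]; norm_num
  simp only [Kip, PhiMap, Matrix.cons_val_zero, Matrix.cons_val_one, Matrix.head_cons,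
    map_mul, map_pow, Complex.conj_ofReal]
  linear_combination (u * conj v) * h2

lemma kip_sum_sum {n : ℕ} (d e : Fin n → ℂ) (g q : Fin n → Fin 2 → ℂ) :
    Kip (∑ i, d i • g i) (∑ j, e j • q j)
      = ∑ i, ∑ j, d i * conj (e j) * Kip (g i) (q j) := by
  simp only [Kip, Finset.sum_apply, Pi.smul_apply, smul_eq_mul, map_sum, map_mul]
  rw [Finset.sum_mul_sum, Finset.sum_mul_sum, ← Finset.sum_sub_distrib]
  refine Finset.sum_congr rfl fun i _ => ?_
  rw [← Finset.sum_sub_distrib]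
  refine Finset.sum_congr rfl fun j _ => ?_
  ring

lemma inv_sq_geom (r : ℂ) (hr : ‖r‖ < 1) :
    ((1 - r)^2)⁻¹ = ∑' (k : ℕ), ((k:ℂ)+1) * r^k := by
  have hne : (1 : ℂ) - r ≠ 0 := by
    intro h; rw [sub_eq_zero] at h
    simp [← h] at hr
  have h1 : ∑' (k:ℕ), r ^ k = (1 - r)⁻¹ := tsum_geometric_of_norm_lt_one hr
  have h2 : ∑' (k:ℕ), (k:ℂ) * r ^ k = r / (1 - r)^2 :=
    tsum_coe_mul_geometric_of_norm_lt_one hr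
  have hs1 : Summable fun k : ℕ => (k:ℂ) * r ^ k := by
    have := summable_pow_mul_geometric_of_norm_lt_one (R := ℂ) 1 hr
    simpa using this
  have hs2 : Summable fun k : ℕ => r ^ k := summable_geometric_of_norm_lt_one hr
  have : ∑' (k:ℕ), ((k:ℂ)+1) * r^k
      = (∑' (k:ℕ), (k:ℂ) * r ^ k) + ∑' (k:ℕ), r ^ k := by
    rw [← Summable.tsum_add hs1 hs2]
    congr 1; funext k; ring
  rw [this, h1, h2]
  field_simp
  ring

lemma summable_kpow (r : ℂ) (hr : ‖r‖ < 1) :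
    Summable fun k : ℕ => ((k:ℂ)+1) * r ^ k := by
  have hs1 : Summable fun k : ℕ => (k:ℂ) * r ^ k := by
    have := summable_pow_mul_geometric_of_norm_lt_one (R := ℂ) 1 hr
    simpa using this
  have hs2 : Summable fun k : ℕ => r ^ k := summable_geometric_of_norm_lt_one hr
  have := hs1.add hs2
  refine this.congr fun k => ?_
  ring

/-- For any ⟨·,·⟩_K-contraction `T` and nonneutral `a ∈ Ω`, the map `T ∘ φ_a`
belongs to the class `𝓡𝓢_Φ(Ω)`: the associated kernel is positive semi-definite. -/
theorem contraction_comp_phiK_kernel_posSemidef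
    (T : (Fin 2 → ℂ) →ₗ[ℂ] (Fin 2 → ℂ))
    (hT : ∀ z : Fin 2 → ℂ, (Kip (T z) (T z)).re ≤ (Kip z z).re)
    (a : Fin 2 → ℂ) (haO : a ∈ Omega) (ha : Kip a a ≠ 0)
    (n : ℕ) (x : Fin n → ℂ)
    (hx : ∀ i, ‖x i‖ < 1 ∧ Kip (PhiMap (x i)) a ≠ 1) :
    (Matrix.of fun i j : Fin n =>
      (1 - Kip (T (phiK a (PhiMap (x i)))) (T (phiK a (PhiMap (x j))))) /
        (1 - Kip (PhiMap (x i)) (PhiMap (x j)))).PosSemidef := by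
  classical
  set g : Fin n → Fin 2 → ℂ := fun i => phiK a (PhiMap (x i)) with hg
  set B : Fin n → Fin n → ℂ := fun i j => Kip (g i) (g j) - Kip (T (g i)) (T (g j)) with hB
  set u : Fin n → Fin n → ℂ := fun i j => x i * conj (x j) with hu
  set c : Fin n → ℂ := fun i => (1 - Kip (PhiMap (x i)) a)⁻¹ with hc
  set t : ℂ := Kip a a with htdef
  have hunorm : ∀ i j, ‖u i j‖ < 1 := by
    intro i j
    have := (hx i).1; have := (hx j).1
    calc ‖u i j‖ = ‖x i‖ * ‖x j‖ := by
          simp [hu, map_mul]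
      _ < 1 := by nlinarith [norm_nonneg (x i), norm_nonneg (x j)]
  have huone : ∀ i j, (1:ℂ) - u i j ≠ 0 := by
    intro i j h
    rw [sub_eq_zero] at h
    have := hunorm i j
    rw [← h] at this; simp at this
  have hD : ∀ i j, 1 - Kip (PhiMap (x i)) (PhiMap (x j)) = (1 - u i j)^2 := by
    intro i j; rw [kip_Phi]; simp only [hu]; ring
  have hαne : ∀ i, (1:ℂ) - Kip (PhiMap (x i)) a ≠ 0 :=
    fun i => sub_ne_zero_of_ne fun h => (hx i).2 h.symm
  have hkey : ∀ i j,
      (1 - Kip (PhiMap (x i)) a) * conj (1 - Kip (PhiMap (x j)) a) *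
          (1 - Kip (g i) (g j)) = (1 - t) * (1 - u i j)^2 := by
    intro i j
    rw [← hD]
    exact key_identity a haO ha _ _ (hx i).2 (hx j).2
  have hαcne : ∀ j, conj ((1:ℂ) - Kip (PhiMap (x j)) a) ≠ 0 := by
    intro j h
    exact hαne j (by simpa using congrArg conj h)
  -- entrywise decomposition
  have hentry : ∀ i j,
      (1 - Kip (T (g i)) (T (g j))) / (1 - Kip (PhiMap (x i)) (PhiMap (x j)))
        = (1 - t) * (c i * conj (c j)) + B i j * ((1 - u i j)^2)⁻¹ := by
    intro i j
    rw [hD i j]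
    have hk := hkey i j
    have h1 := hαne i
    have h2 := hαcne j
    have h3 := huone i j
    have hgg : (1 - Kip (g i) (g j)) * ((1 - u i j)^2)⁻¹
        = (1 - t) * (c i * conj (c j)) := by
      simp only [hc, map_inv₀]
      set A := (1 : ℂ) - Kip (PhiMap (x i)) a with hA
      set C := conj ((1 : ℂ) - Kip (PhiMap (x j)) a) with hC
      field_simp
      linear_combination hk
    calc (1 - Kip (T (g i)) (T (g j))) / ((1 - u i j)^2)
        = (1 - Kip (g i) (g j)) * ((1 - u i j)^2)⁻¹ + B i j * ((1 - u i j)^2)⁻¹ := by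
          rw [div_eq_mul_inv]; simp only [hB]; ring
      _ = (1 - t) * (c i * conj (c j)) + B i j * ((1 - u i j)^2)⁻¹ := by rw [hgg]
  -- real part of t
  have htre : t = ((t.re : ℝ) : ℂ) := kip_self_ofReal a
  have htlt : t.re < 1 := omega_re_lt a haO
  refine Matrix.PosSemidef.of_dotProduct_mulVec_nonneg ?_ ?_
  · -- Hermitian
    refine Matrix.IsHermitian.ext fun i j => ?_
    simp only [Matrix.of_apply, RCLike.star_def, map_div₀, map_sub, map_one, kip_conj]
  · intro v
    -- the quadratic form
    have expand : dotProduct (star v) (Matrix.mulVec (Matrix.of fun i j : Fin n =>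
        (1 - Kip (T (g i)) (T (g j))) / (1 - Kip (PhiMap (x i)) (PhiMap (x j)))) v)
        = ∑ i, ∑ j, conj (v i) * v j *
            ((1 - Kip (T (g i)) (T (g j))) / (1 - Kip (PhiMap (x i)) (PhiMap (x j)))) := by
      simp only [dotProduct, Matrix.mulVec, Matrix.of_apply, Pi.star_apply,
        RCLike.star_def, Finset.mul_sum]
      refine Finset.sum_congr rfl fun i _ => Finset.sum_congr rfl fun j _ => by ring
    rw [expand]
    have split : ∀ i j, conj (v i) * v j *
        ((1 - Kip (T (g i)) (T (g j))) / (1 - Kip (PhiMap (x i)) (PhiMap (x j))))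
        = conj (v i) * v j * ((1 - t) * (c i * conj (c j)))
          + conj (v i) * v j * (B i j * ((1 - u i j)^2)⁻¹) := by
      intro i j; rw [hentry i j]; ring
    simp only [split, Finset.sum_add_distrib]
    -- first part
    set W : ℂ := ∑ i, conj (v i) * c i with hW
    have q1 : ∑ i, ∑ j, conj (v i) * v j * ((1 - t) * (c i * conj (c j)))
        = ((1 - t.re : ℝ) : ℂ) * ((Complex.normSq W : ℝ) : ℂ) := by
      have : W * conj W = ∑ i, ∑ j, conj (v i) * v j * (c i * conj (c j)) := by
        rw [hW, map_sum, Finset.sum_mul_sum]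
        refine Finset.sum_congr rfl fun i _ => Finset.sum_congr rfl fun j _ => ?_
        simp only [map_mul, Complex.conj_conj]
        ring
      have h1t : (1:ℂ) - t = ((1 - t.re : ℝ) : ℂ) := by
        push_cast
        rw [← htre]
      rw [← Complex.mul_conj, this, Finset.mul_sum, ← h1t]
      refine Finset.sum_congr rfl fun i _ => ?_
      rw [Finset.mul_sum]
      refine Finset.sum_congr rfl fun j _ => by ring
    -- second part: series expansion
    set d : ℕ → Fin n → ℂ := fun k i => conj (v i) * (x i) ^ k with hd
    set h : ℕ → Fin 2 → ℂ := fun k => ∑ i, d k i • g i with hh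
    set ρ : ℕ → ℝ := fun k => ((k:ℝ)+1) * ((Kip (h k) (h k)).re - (Kip (T (h k)) (T (h k))).re)
      with hρ
    have hsummand : ∀ i j, Summable fun k : ℕ =>
        ((k:ℂ)+1) * (d k i * conj (d k j) * B i j) := by
      intro i j
      refine ((summable_kpow (u i j) (hunorm i j)).mul_left
        (conj (v i) * v j * B i j)).congr fun k => ?_
      simp only [hd, map_mul, Complex.conj_conj, map_pow, hu, mul_pow]
      ring
    have q2 : ∑ i, ∑ j, conj (v i) * v j * (B i j * ((1 - u i j)^2)⁻¹)
        = ∑' (k : ℕ), ∑ i, ∑ j, ((k:ℂ)+1) * (d k i * conj (d k j) * B i j) := by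
      rw [Summable.tsum_finsetSum (fun i _ => summable_sum (fun j _ => hsummand i j))]
      refine Finset.sum_congr rfl fun i _ => ?_
      rw [Summable.tsum_finsetSum (fun j _ => hsummand i j)]
      refine Finset.sum_congr rfl fun j _ => ?_
      rw [inv_sq_geom (u i j) (hunorm i j), ← tsum_mul_left, ← tsum_mul_left]
      refine tsum_congr fun k => ?_
      simp only [hd, map_mul, Complex.conj_conj, map_pow, hu, mul_pow]
      ring
    have q2' : ∀ k : ℕ, ∑ i, ∑ j, ((k:ℂ)+1) * (d k i * conj (d k j) * B i j)
        = ((ρ k : ℝ) : ℂ) := by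
      intro k
      have hsum1 : ∑ i, ∑ j, d k i * conj (d k j) * Kip (g i) (g j)
          = Kip (h k) (h k) := (kip_sum_sum (d k) (d k) g g).symm
      have hTh : T (h k) = ∑ i, d k i • T (g i) := by
        rw [hh, map_sum]
        refine Finset.sum_congr rfl fun i _ => by rw [map_smul]
      have hsum2 : ∑ i, ∑ j, d k i * conj (d k j) * Kip (T (g i)) (T (g j))
          = Kip (T (h k)) (T (h k)) := by
        rw [hTh]; exact (kip_sum_sum (d k) (d k) (fun i => T (g i)) (fun i => T (g i))).symm
      have : ∑ i, ∑ j, ((k:ℂ)+1) * (d k i * conj (d k j) * B i j)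
          = ((k:ℂ)+1) * (Kip (h k) (h k) - Kip (T (h k)) (T (h k))) := by
        rw [← hsum1, ← hsum2, ← Finset.sum_sub_distrib, Finset.mul_sum]
        refine Finset.sum_congr rfl fun i _ => ?_
        rw [← Finset.sum_sub_distrib, Finset.mul_sum]
        refine Finset.sum_congr rfl fun j _ => ?_
        simp only [hB]; ring
      rw [this, hρ, kip_self_ofReal (h k), kip_self_ofReal (T (h k))]
      push_cast
      ring
    have hρnn : ∀ k, 0 ≤ ρ k := by
      intro k
      have := hT (h k)
      have : 0 ≤ (Kip (h k) (h k)).re - (Kip (T (h k)) (T (h k))).re := by linarith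
      have hk1 : (0:ℝ) ≤ (k:ℝ) + 1 := by positivity
      exact mul_nonneg hk1 this
    rw [q1, q2]
    have : ∑' (k : ℕ), ∑ i, ∑ j, ((k:ℂ)+1) * (d k i * conj (d k j) * B i j)
        = ((∑' (k : ℕ), ρ k : ℝ) : ℂ) := by
      rw [Complex.ofReal_tsum]
      exact tsum_congr q2'
    rw [this, ← Complex.ofReal_mul, ← Complex.ofReal_add]
    rw [Complex.zero_le_real]
    have h1 : 0 ≤ (1 - t.re) * Complex.normSq W :=
      mul_nonneg (by linarith) (Complex.normSq_nonneg W)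
    have h2 : 0 ≤ ∑' (k : ℕ), ρ k := tsum_nonneg hρnn
    linarith
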